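/- (Lemma 3.1, part 2: Normalization Property.) For the CPU algorithm iterates: for every iteration k ≥ 1 and every layer 0 ≤ n ≤ N, lim_{r→∞} Σ_{m∈C_n} p_n^{k,r}(m) = 1; in particular the converged layer values satisfy Σ_{m∈C_n} p_n^{k}(m) = 1 for every k ≥ 2 and every n. -/

import Mathlib

open Finset Filter

/-- Number of busy units in state `B`. -/
def wt {N : ℕ} (B : Fin N → Bool) : ℕ := (Finset.univ.filter fun i => B i = true).card

/-- The layer `C_n`: states with exactly `n` busy units. -/
def layer (N n : ℕ) : Finset (Fin N → Bool) := Finset.univ.filter fun B => wt B = n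

/-- The full state: all units busy. -/
def fullState (N : ℕ) : Fin N → Bool := fun _ => true

/-- Unit `i` is the most preferred free unit at node `j` in state `l`
(ranks are given by the permutation `ζ j`). -/
def dispatched {N J : ℕ} (ζ : Fin J → (Fin N ≃ Fin N)) (l : Fin N → Bool) (j : Fin J)
    (i : Fin N) : Prop :=
  l i = false ∧ ∀ h : Fin N, (h : ℕ) < ((ζ j).symm i : ℕ) → l ((ζ j) h) = true

instance {N J : ℕ} (ζ : Fin J → (Fin N ≃ Fin N)) (l : Fin N → Bool) (j : Fin J) (i : Fin N) :
    Decidable (dispatched ζ l j i) := by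
  unfold dispatched; infer_instance

/-- Upward transition rate `λ_{lm}`: nonzero only if `m` arises from `l` by flipping
one coordinate `i` from free to busy, in which case it is `λ` times the total demand
fraction of the nodes dispatching unit `i` in state `l`. -/
noncomputable def upRate {N J : ℕ} (lam : ℝ) (f : Fin J → ℝ) (ζ : Fin J → (Fin N ≃ Fin N))
    (l m : Fin N → Bool) : ℝ :=
  ∑ i : Fin N,
    if l i = false ∧ m = Function.update l i true then
      lam * ∑ j : Fin J, if dispatched ζ l j i then f j else 0
    else 0

/-- Downward transition rate `μ_{lm}`: nonzero only if `m` arises from `l` by flipping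
one coordinate `i` from busy to free, in which case it is `ν i`. -/
noncomputable def downRate {N : ℕ} (ν : Fin N → ℝ) (l m : Fin N → Bool) : ℝ :=
  ∑ i : Fin N, if l i = true ∧ m = Function.update l i false then ν i else 0

/-- Total upward rate `λ_m = Σ_l λ_{ml}` out of state `m`. -/
noncomputable def totalUp {N J : ℕ} (lam : ℝ) (f : Fin J → ℝ) (ζ : Fin J → (Fin N ≃ Fin N))
    (m : Fin N → Bool) : ℝ :=
  ∑ l : Fin N → Bool, upRate lam f ζ m l

/-- Total service completion rate `μ_m = Σ_{i busy} ν i` out of state `m`. -/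
noncomputable def totalDown {N : ℕ} (ν : Fin N → ℝ) (m : Fin N → Bool) : ℝ :=
  ∑ i : Fin N, if m i = true then ν i else 0

/-- `C^m_n`: the states of layer `n` at Hamming distance 1 from `m`. -/
def adjLayer {N : ℕ} (n : ℕ) (m : Fin N → Bool) : Finset (Fin N → Bool) :=
  (layer N n).filter fun l => (Finset.univ.filter fun i => l i ≠ m i).card = 1

/-- `λ^k(n) = Σ_{m ∈ C_n} p_n^k(m) · λ_m`. -/
noncomputable def lamI {N J : ℕ} (lam : ℝ) (f : Fin J → ℝ) (ζ : Fin J → (Fin N ≃ Fin N))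
    (pI : ℕ → ℕ → (Fin N → Bool) → ℝ) (k n : ℕ) : ℝ :=
  ∑ m ∈ layer N n, pI k n m * totalUp lam f ζ m

/-- `μ^k(n) = Σ_{m ∈ C_n} p_n^k(m) · μ_m`. -/
noncomputable def muI {N : ℕ} (ν : Fin N → ℝ) (pI : ℕ → ℕ → (Fin N → Bool) → ℝ) (k n : ℕ) : ℝ :=
  ∑ m ∈ layer N n, pI k n m * totalDown ν m

/-- `μ^{k,r}(n) = Σ_{m ∈ C_n} p_n^{k,r}(m) · μ_m`. -/
noncomputable def muR {N : ℕ} (ν : Fin N → ℝ) (pR : ℕ → ℕ → ℕ → (Fin N → Bool) → ℝ)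
    (k n r : ℕ) : ℝ :=
  ∑ m ∈ layer N n, pR k n r m * totalDown ν m

/-- The iterates of the CPU (Conditional Probability Update) algorithm:
`pI k n m` is the converged outer iterate `p_n^k(m)` and `pR k n r m` is the inner
iterate `p_n^{k,r}(m)`.  The converged value `p_n^k` is by definition the limit of
the inner iterates as `r → ∞`. -/
def IsCPUIterates {N J : ℕ} (lam : ℝ) (f : Fin J → ℝ) (ζ : Fin J → (Fin N ≃ Fin N))
    (ν : Fin N → ℝ) (pI : ℕ → ℕ → (Fin N → Bool) → ℝ)
    (pR : ℕ → ℕ → ℕ → (Fin N → Bool) → ℝ) : Prop :=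
  (∀ n ≤ N, ∀ m ∈ layer N n, pI 0 n m = 0) ∧
  (∀ n ≤ N, ∀ m ∈ layer N n, pI 1 n m = 1 / (N.choose n : ℝ)) ∧
  (∀ n ≤ N, ∀ r, 1 ≤ r → ∀ m ∈ layer N n, pR 1 n r m = 1 / (N.choose n : ℝ)) ∧
  (∀ k, 1 ≤ k → ∀ m ∈ layer N 0, pI k 0 m = 1) ∧
  (∀ k, 1 ≤ k → ∀ m ∈ layer N N, pI k N m = 1) ∧
  (∀ k, 2 ≤ k → ∀ r, ∀ m ∈ layer N 0, pR k 0 r m = 1) ∧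
  (∀ k, 2 ≤ k → ∀ r, ∀ m ∈ layer N N, pR k N r m = 1) ∧
  (∀ k, 2 ≤ k → ∀ n, 1 ≤ n → n ≤ N - 1 → ∀ m ∈ layer N n, pR k n 0 m = pI (k - 1) n m) ∧
  (∀ k, 2 ≤ k → ∀ n, 1 ≤ n → n ≤ N - 1 → ∀ r, 1 ≤ r → ∀ m ∈ layer N n,
    pR k n r m =
      (∑ l ∈ layer N (n - 1),
        pI k (n - 1) l * (muR ν pR k n (r - 1) / lamI lam f ζ pI k (n - 1)) *
          (upRate lam f ζ l m / (totalUp lam f ζ m + totalDown ν m))) +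
      (∑ l ∈ adjLayer (n + 1) m,
        pI (k - 1) (n + 1) l * (lamI lam f ζ pI (k - 1) n / muI ν pI (k - 1) (n + 1)) *
          (downRate ν l m / (totalUp lam f ζ m + totalDown ν m)))) ∧
  (∀ k, 2 ≤ k → ∀ n, 1 ≤ n → n ≤ N - 1 → ∀ m ∈ layer N n,
    Filter.Tendsto (fun r => pR k n r m) Filter.atTop (nhds (pI k n m)))

section Helpers

variable {N J : ℕ}

lemma wt_update_true (l : Fin N → Bool) (i : Fin N) (h : l i = false) :
    wt (Function.update l i true) = wt l + 1 := by
  unfold wt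
  have : (Finset.univ.filter fun x => Function.update l i true x = true) =
      insert i (Finset.univ.filter fun x => l x = true) := by
    ext x
    rcases eq_or_ne x i with rfl | hx
    · simp [Function.update_self]
    · simp [Function.update_of_ne hx, hx]
  rw [this, Finset.card_insert_of_notMem (by simp [h])]

lemma wt_update_false (l : Fin N → Bool) (i : Fin N) (h : l i = true) :
    wt l = wt (Function.update l i false) + 1 := by
  unfold wt
  have : (Finset.univ.filter fun x => l x = true) =
      insert i (Finset.univ.filter fun x => Function.update l i false x = true) := by
    ext x
    rcases eq_or_ne x i with rfl | hx
    · simp [h]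
    · simp [Function.update_of_ne hx, hx]
  rw [this, Finset.card_insert_of_notMem (by simp [Function.update_self])]

lemma card_layer (N n : ℕ) : (layer N n).card = N.choose n := by
  have h : (layer N n).card = ((Finset.univ : Finset (Fin N)).powersetCard n).card := by
    apply Finset.card_bij (fun B _ => Finset.univ.filter fun i => B i = true)
    · intro B hB
      simp only [layer, Finset.mem_filter] at hB
      simp only [Finset.mem_powersetCard]
      exact ⟨Finset.filter_subset _ _ |>.trans (by simp), hB.2⟩
    · intro B hB B' hB' h
      funext i
      have := Finset.ext_iff.mp h i
      simp only [Finset.mem_filter, Finset.mem_univ, true_and] at this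
      cases hBi : B i <;> cases hB'i : B' i <;> simp_all
    · intro s hs
      simp only [Finset.mem_powersetCard] at hs
      refine ⟨fun i => decide (i ∈ s), ?_, ?_⟩
      · simp only [layer, Finset.mem_filter, Finset.mem_univ, true_and]; unfold wt
        rw [← hs.2]
        congr 1
        ext i; simp
      · ext i; simp
  rw [h, Finset.card_powersetCard]
  simp

lemma layer_nonempty {n : ℕ} (hn : n ≤ N) : (layer N n).Nonempty := by
  rw [← Finset.card_pos, card_layer]
  exact Nat.choose_pos hn

end Helpers
section Helpers2

variable {N J : ℕ}

lemma existsUnique_dispatched (ζ : Fin J → (Fin N ≃ Fin N)) (m : Fin N → Bool)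
    (hm : ∃ i, m i = false) (j : Fin J) : ∃! i, dispatched ζ m j i := by
  obtain ⟨i₁, hi₁⟩ := hm
  set s : Finset (Fin N) := Finset.univ.filter (fun h => m ((ζ j) h) = false) with hs
  have hne : s.Nonempty := ⟨(ζ j).symm i₁, by simp [hs, hi₁]⟩
  set h₀ := s.min' hne with hh₀
  have hh₀s : h₀ ∈ s := s.min'_mem hne
  have hm0 : m ((ζ j) h₀) = false := by
    simpa [hs] using hh₀s
  refine ⟨(ζ j) h₀, ⟨hm0, ?_⟩, ?_⟩
  · intro h hlt
    rw [Equiv.symm_apply_apply] at hlt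
    by_contra hcon
    have hhs : h ∈ s := by
      simp only [hs, Finset.mem_filter, Finset.mem_univ, true_and]
      exact Bool.eq_false_iff.mpr hcon
    have := s.min'_le h hhs
    rw [← hh₀] at this
    exact absurd hlt (not_lt.mpr this)
  · rintro i ⟨hif, hpref⟩
    have hhs : (ζ j).symm i ∈ s := by simp [hs, hif]
    have hle : h₀ ≤ (ζ j).symm i := s.min'_le _ hhs
    have heq : (ζ j).symm i = h₀ := by
      by_contra hne'
      have hlt : (h₀ : ℕ) < ((ζ j).symm i : ℕ) := by
        have := lt_of_le_of_ne hle (Ne.symm hne')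
        exact this
      have := hpref h₀ hlt
      rw [hm0] at this; exact Bool.false_ne_true this
    calc i = (ζ j) ((ζ j).symm i) := ((ζ j).apply_symm_apply i).symm
    _ = (ζ j) h₀ := by rw [heq]

lemma sum_dispatched_ite (ζ : Fin J → (Fin N ≃ Fin N)) (m : Fin N → Bool)
    (hm : ∃ i, m i = false) (j : Fin J) (c : ℝ) :
    (∑ i : Fin N, if dispatched ζ m j i then c else 0) = c := by
  obtain ⟨i₀, hi₀, huniq⟩ := existsUnique_dispatched ζ m hm j
  rw [Finset.sum_eq_single_of_mem i₀ (Finset.mem_univ _)]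
  · rw [if_pos hi₀]
  · intro i _ hne
    rw [if_neg (fun h => hne (huniq i h))]

lemma totalUp_eq_lam (lam : ℝ) (f : Fin J → ℝ) (hfsum : ∑ j, f j = 1)
    (ζ : Fin J → (Fin N ≃ Fin N)) (m : Fin N → Bool) (hm : ∃ i, m i = false) :
    totalUp lam f ζ m = lam := by
  unfold totalUp upRate
  rw [Finset.sum_comm]
  have step : ∀ i : Fin N,
      (∑ l : Fin N → Bool, if m i = false ∧ l = Function.update m i true then
        lam * ∑ j : Fin J, if dispatched ζ m j i then f j else 0 else 0)
      = lam * ∑ j : Fin J, if dispatched ζ m j i then f j else 0 := by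
    intro i
    by_cases hmi : m i = false
    · simp only [hmi, true_and]
      rw [Finset.sum_ite_eq' Finset.univ (Function.update m i true)
        (fun _ => lam * ∑ j : Fin J, if dispatched ζ m j i then f j else 0)]
      simp
    · simp only [hmi, false_and, if_false, Finset.sum_const_zero]
      have : ∀ j : Fin J, ¬ dispatched ζ m j i := fun j hd => hmi hd.1
      simp [this]
  rw [Finset.sum_congr rfl (fun i _ => step i), ← Finset.mul_sum, Finset.sum_comm]
  have : ∀ j : Fin J, (∑ i : Fin N, if dispatched ζ m j i then f j else 0) = f j :=
    fun j => sum_dispatched_ite ζ m hm j (f j)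
  rw [Finset.sum_congr rfl (fun j _ => this j), hfsum, mul_one]

end Helpers2
section Helpers3

variable {N J : ℕ}

lemma upRate_eq_zero_of_wt (lam : ℝ) (f : Fin J → ℝ) (ζ : Fin J → (Fin N ≃ Fin N))
    (l m : Fin N → Bool) (h : wt m ≠ wt l + 1) : upRate lam f ζ l m = 0 := by
  unfold upRate
  apply Finset.sum_eq_zero
  intro i _
  rw [if_neg]
  rintro ⟨hli, rfl⟩
  exact h (wt_update_true l i hli)

lemma downRate_eq_zero_of_wt (ν : Fin N → ℝ) (l m : Fin N → Bool)
    (h : wt l ≠ wt m + 1) : downRate ν l m = 0 := by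
  unfold downRate
  apply Finset.sum_eq_zero
  intro i _
  rw [if_neg]
  rintro ⟨hli, rfl⟩
  exact h (wt_update_false l i hli)

lemma sum_upRate_layer (lam : ℝ) (f : Fin J → ℝ) (ζ : Fin J → (Fin N ≃ Fin N))
    (l : Fin N → Bool) (n : ℕ) (hl : wt l + 1 = n) :
    ∑ m ∈ layer N n, upRate lam f ζ l m = totalUp lam f ζ l := by
  unfold totalUp
  rw [← Finset.sum_subset (Finset.subset_univ (layer N n))]
  intro m _ hm
  apply upRate_eq_zero_of_wt
  intro hwt
  exact hm (by simp [layer, hwt, hl])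

lemma sum_downRate_layer (ν : Fin N → ℝ) (l : Fin N → Bool) (n : ℕ) (hl : wt l = n + 1) :
    ∑ m ∈ layer N n, downRate ν l m = totalDown ν l := by
  have huniv : ∑ m : Fin N → Bool, downRate ν l m = totalDown ν l := by
    unfold downRate totalDown
    rw [Finset.sum_comm]
    apply Finset.sum_congr rfl
    intro i _
    by_cases hli : l i = true
    · simp only [hli, true_and, if_true]
      rw [Finset.sum_ite_eq' Finset.univ (Function.update l i false) (fun _ => ν i)]
      simp
    · simp [hli]
  rw [← huniv]
  apply Finset.sum_subset (Finset.subset_univ (layer N n))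
  intro m _ hm
  apply downRate_eq_zero_of_wt
  intro hwt
  exact hm (by simp only [layer, Finset.mem_filter, Finset.mem_univ, true_and]; omega)

lemma downRate_eq_zero_of_not_adj (ν : Fin N → ℝ) {n : ℕ} {l m : Fin N → Bool}
    (hl : l ∈ layer N (n + 1)) (hadj : l ∉ adjLayer (n + 1) m) :
    downRate ν l m = 0 := by
  unfold downRate
  apply Finset.sum_eq_zero
  intro i _
  rw [if_neg]
  rintro ⟨hli, rfl⟩
  apply hadj
  simp only [adjLayer, Finset.mem_filter]
  refine ⟨hl, ?_⟩
  have : (Finset.univ.filter fun i' => l i' ≠ Function.update l i false i') = {i} := by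
    ext x
    rcases eq_or_ne x i with rfl | hx
    · simp [Function.update_self, hli]
    · simp [Function.update_of_ne hx, hx]
  rw [this, Finset.card_singleton]

lemma sum_adj_downRate (ν : Fin N → ℝ) (n : ℕ) (G : (Fin N → Bool) → ℝ) :
    ∑ m ∈ layer N n, ∑ l ∈ adjLayer (n + 1) m, G l * downRate ν l m
      = ∑ l ∈ layer N (n + 1), G l * totalDown ν l := by
  have hstep : ∀ m ∈ layer N n,
      ∑ l ∈ adjLayer (n + 1) m, G l * downRate ν l m
        = ∑ l ∈ layer N (n + 1), G l * downRate ν l m := by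
    intro m _
    apply Finset.sum_subset (Finset.filter_subset _ _)
    intro l hl hadj
    rw [downRate_eq_zero_of_not_adj ν hl hadj, mul_zero]
  rw [Finset.sum_congr rfl hstep, Finset.sum_comm]
  apply Finset.sum_congr rfl
  intro l hl
  rw [← Finset.mul_sum, sum_downRate_layer ν l n (by simpa [layer] using hl)]

lemma upRate_nonneg (lam : ℝ) (hlam : 0 ≤ lam) (f : Fin J → ℝ) (hf : ∀ j, 0 ≤ f j)
    (ζ : Fin J → (Fin N ≃ Fin N)) (l m : Fin N → Bool) : 0 ≤ upRate lam f ζ l m := by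
  apply Finset.sum_nonneg
  intro i _
  split
  · exact mul_nonneg hlam (Finset.sum_nonneg fun j _ => by split <;> simp [hf j])
  · exact le_refl 0

lemma downRate_nonneg (ν : Fin N → ℝ) (hν : ∀ i, 0 ≤ ν i) (l m : Fin N → Bool) :
    0 ≤ downRate ν l m :=
  Finset.sum_nonneg fun i _ => by split <;> simp [hν i]

lemma totalUp_nonneg (lam : ℝ) (hlam : 0 ≤ lam) (f : Fin J → ℝ) (hf : ∀ j, 0 ≤ f j)
    (ζ : Fin J → (Fin N ≃ Fin N)) (m : Fin N → Bool) : 0 ≤ totalUp lam f ζ m :=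
  Finset.sum_nonneg fun l _ => upRate_nonneg lam hlam f hf ζ m l

lemma totalDown_nonneg (ν : Fin N → ℝ) (hν : ∀ i, 0 ≤ ν i) (m : Fin N → Bool) :
    0 ≤ totalDown ν m :=
  Finset.sum_nonneg fun i _ => by split <;> simp [hν i]

lemma totalDown_pos (ν : Fin N → ℝ) (hν : ∀ i, 0 < ν i) (m : Fin N → Bool)
    (hm : 1 ≤ wt m) : 0 < totalDown ν m := by
  have hne : (Finset.univ.filter fun i => m i = true).Nonempty := by
    rw [← Finset.card_pos]; exact hm
  obtain ⟨i, hi⟩ := hne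
  simp only [Finset.mem_filter, Finset.mem_univ, true_and] at hi
  unfold totalDown
  have : ν i ≤ ∑ i' : Fin N, if m i' = true then ν i' else 0 := by
    have := Finset.single_le_sum (f := fun i' => if m i' = true then ν i' else 0)
      (fun i' _ => by split <;> simp [(hν i').le]) (Finset.mem_univ i)
    simpa [hi] using this
  linarith [hν i]

end Helpers3
section Helpers4

variable {N J : ℕ}

lemma mem_layer_iff {n : ℕ} {m : Fin N → Bool} : m ∈ layer N n ↔ wt m = n := by
  simp [layer]

lemma exists_false_of_wt_lt {m : Fin N → Bool} (h : wt m < N) : ∃ i, m i = false := by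
  by_contra hc
  push_neg at hc
  have : (Finset.univ.filter fun i => m i = true) = Finset.univ := by
    ext i; simp [Bool.eq_false_iff.not_left.mp (hc i)]
  rw [wt, this] at h
  simp at h

lemma lamI_eq_lam (lam : ℝ) (f : Fin J → ℝ) (hfsum : ∑ j, f j = 1)
    (ζ : Fin J → (Fin N ≃ Fin N)) (pI : ℕ → ℕ → (Fin N → Bool) → ℝ) (k n : ℕ)
    (hn : n < N) (hsum : ∑ m ∈ layer N n, pI k n m = 1) :
    lamI lam f ζ pI k n = lam := by
  unfold lamI
  have : ∀ m ∈ layer N n, pI k n m * totalUp lam f ζ m = pI k n m * lam := by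
    intro m hm
    rw [totalUp_eq_lam lam f hfsum ζ m
      (exists_false_of_wt_lt (by rw [mem_layer_iff.mp hm]; exact hn))]
  rw [Finset.sum_congr rfl this, ← Finset.sum_mul, hsum, one_mul]

lemma muI_pos (ν : Fin N → ℝ) (hν : ∀ i, 0 < ν i) (pI : ℕ → ℕ → (Fin N → Bool) → ℝ)
    (k n : ℕ) (hn : 1 ≤ n)
    (hnonneg : ∀ m ∈ layer N n, 0 ≤ pI k n m)
    (hsum : ∑ m ∈ layer N n, pI k n m = 1) :
    0 < muI ν pI k n := by
  have hterm : ∀ m ∈ layer N n, 0 ≤ pI k n m * totalDown ν m := fun m hm =>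
    mul_nonneg (hnonneg m hm) (totalDown_nonneg ν (fun i => (hν i).le) m)
  obtain ⟨m₀, hm₀, hpos⟩ : ∃ m ∈ layer N n, 0 < pI k n m := by
    by_contra hc
    push_neg at hc
    have : ∑ m ∈ layer N n, pI k n m ≤ 0 := Finset.sum_nonpos hc
    linarith
  have hd : 0 < totalDown ν m₀ := totalDown_pos ν hν m₀ (by rw [mem_layer_iff.mp hm₀]; exact hn)
  have : pI k n m₀ * totalDown ν m₀ ≤ muI ν pI k n :=
    Finset.single_le_sum hterm hm₀
  have := mul_pos hpos hd
  unfold muI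
  linarith [Finset.single_le_sum hterm hm₀]

end Helpers4
lemma cpu_main
    {N J : ℕ} (hN : 2 ≤ N) (hJ : 1 ≤ J)
    (lam : ℝ) (hlam : 0 < lam)
    (f : Fin J → ℝ) (hf : ∀ j, 0 ≤ f j) (hfsum : ∑ j, f j = 1)
    (ν : Fin N → ℝ) (hν : ∀ i, 0 < ν i)
    (ζ : Fin J → (Fin N ≃ Fin N))
    (pI : ℕ → ℕ → (Fin N → Bool) → ℝ) (pR : ℕ → ℕ → ℕ → (Fin N → Bool) → ℝ)
    (hiter : IsCPUIterates lam f ζ ν pI pR) :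
    ∀ k, 1 ≤ k → ∀ n, n ≤ N →
      (∀ m ∈ layer N n, 0 ≤ pI k n m) ∧ (∑ m ∈ layer N n, pI k n m = 1) := by
  obtain ⟨h1, h2, h3, h4, h5, h6, h7, h8, h9, h10⟩ := hiter
  intro k
  induction k with
  | zero => omega
  | succ k IHk =>
    intro hk1
    rcases Nat.lt_or_ge k 1 with hk0 | hk
    · -- k = 0, so k+1 = 1 : base case
      interval_cases k
      intro n hn
      constructor
      · intro m hm
        rw [h2 n hn m hm]
        positivity
      · have : ∀ m ∈ layer N n, pI 1 n m = 1 / (N.choose n : ℝ) := h2 n hn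
        rw [Finset.sum_congr rfl this, Finset.sum_const, card_layer, nsmul_eq_mul]
        have : (N.choose n : ℝ) ≠ 0 := Nat.cast_ne_zero.mpr (Nat.choose_pos hn).ne'
        field_simp
    · -- inductive step : K = k + 1 ≥ 2
      have Qk := IHk hk
      set K := k + 1 with hKdef
      have hK : 2 ≤ K := by omega
      intro n
      induction n using Nat.strong_induction_on with
      | _ n IH =>
        intro hn
        rcases Nat.eq_zero_or_pos n with rfl | hn1
        · constructor
          · intro m hm; rw [h4 K (by omega) m hm]; norm_num
          · rw [Finset.sum_congr rfl (h4 K (by omega)), Finset.sum_const, card_layer]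
            simp
        rcases eq_or_lt_of_le hn with rfl | hnN
        · constructor
          · intro m hm; rw [h5 K (by omega) m hm]; norm_num
          · rw [Finset.sum_congr rfl (h5 K (by omega)), Finset.sum_const, card_layer]
            simp
        -- middle case : 1 ≤ n ≤ N - 1
        have hn2 : n ≤ N - 1 := by omega
        have IHprev := IH (n - 1) (by omega) (by omega)
        have hK1 : K - 1 = k := by omega
        -- nonnegativity of the inner iterates
        have pRnonneg : ∀ r, ∀ m ∈ layer N n, 0 ≤ pR K n r m := by
          intro r
          induction r with
          | zero =>
            intro m hm
            rw [h8 K hK n hn1 hn2 m hm, hK1]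
            exact (Qk n (by omega)).1 m hm
          | succ r IHr =>
            intro m hm
            rw [h9 K hK n hn1 hn2 (r + 1) (by omega) m hm]
            have hmuR : 0 ≤ muR ν pR K n (r + 1 - 1) := by
              simp only [Nat.add_sub_cancel]
              exact Finset.sum_nonneg fun m' hm' => mul_nonneg (IHr m' hm')
                (totalDown_nonneg ν (fun i => (hν i).le) m')
            have hlamI1 : 0 ≤ lamI lam f ζ pI K (n - 1) :=
              Finset.sum_nonneg fun l hl => mul_nonneg (IHprev.1 l hl)
                (totalUp_nonneg lam hlam.le f hf ζ l)
            have hlamI2 : 0 ≤ lamI lam f ζ pI (K - 1) n := by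
              rw [hK1]
              exact Finset.sum_nonneg fun l hl => mul_nonneg ((Qk n (by omega)).1 l hl)
                (totalUp_nonneg lam hlam.le f hf ζ l)
            have hmuI2 : 0 ≤ muI ν pI (K - 1) (n + 1) := by
              rw [hK1]
              exact Finset.sum_nonneg fun l hl => mul_nonneg ((Qk (n + 1) (by omega)).1 l hl)
                (totalDown_nonneg ν (fun i => (hν i).le) l)
            apply add_nonneg
            · apply Finset.sum_nonneg
              intro l hl
              apply mul_nonneg (mul_nonneg (IHprev.1 l hl) (div_nonneg hmuR hlamI1))
              exact div_nonneg (upRate_nonneg lam hlam.le f hf ζ l m)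
                (add_nonneg (totalUp_nonneg lam hlam.le f hf ζ m)
                  (totalDown_nonneg ν (fun i => (hν i).le) m))
            · apply Finset.sum_nonneg
              intro l hl
              have hl' : l ∈ layer N (n + 1) := Finset.mem_of_mem_filter l hl
              refine mul_nonneg (mul_nonneg ?_ (div_nonneg hlamI2 hmuI2)) ?_
              · rw [hK1]; exact (Qk (n + 1) (by omega)).1 l hl'
              · exact div_nonneg (downRate_nonneg ν (fun i => (hν i).le) l m)
                  (add_nonneg (totalUp_nonneg lam hlam.le f hf ζ m)
                    (totalDown_nonneg ν (fun i => (hν i).le) m))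
        have pInonneg : ∀ m ∈ layer N n, 0 ≤ pI K n m := fun m hm =>
          ge_of_tendsto' (h10 K hK n hn1 hn2 m hm) (fun r => pRnonneg r m hm)
        refine ⟨pInonneg, ?_⟩
        have hlamIprev : lamI lam f ζ pI K (n - 1) = lam :=
          lamI_eq_lam lam f hfsum ζ pI K (n - 1) (by omega) IHprev.2
        have hlamIkn : lamI lam f ζ pI k n = lam :=
          lamI_eq_lam lam f hfsum ζ pI k n (by omega) (Qk n (by omega)).2
        have hmuIk : 0 < muI ν pI k (n + 1) :=
          muI_pos ν hν pI k (n + 1) (by omega) (Qk (n + 1) (by omega)).1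
            (Qk (n + 1) (by omega)).2
        have hmuRlim : Tendsto (fun r => muR ν pR K n r) atTop (nhds (muI ν pI K n)) := by
          unfold muR muI
          exact tendsto_finset_sum _ (fun m hm => ((h10 K hK n hn1 hn2 m hm).mul_const _))
        have htot : ∀ m ∈ layer N n, totalUp lam f ζ m = lam := fun m hm =>
          totalUp_eq_lam lam f hfsum ζ m
            (exists_false_of_wt_lt (by rw [mem_layer_iff.mp hm]; omega))
        have htotpos : ∀ m ∈ layer N n, 0 < totalUp lam f ζ m + totalDown ν m := by
          intro m hm
          rw [htot m hm]
          have := totalDown_nonneg ν (fun i => (hν i).le) m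
          linarith
        -- fixed-point equation obtained by letting r → ∞ in the recursion
        have hfix : ∀ m ∈ layer N n, pI K n m =
            muI ν pI K n * (∑ l ∈ layer N (n - 1),
              pI K (n - 1) l / lamI lam f ζ pI K (n - 1) *
                (upRate lam f ζ l m / (totalUp lam f ζ m + totalDown ν m))) +
            (∑ l ∈ adjLayer (n + 1) m,
              pI (K - 1) (n + 1) l * (lamI lam f ζ pI (K - 1) n / muI ν pI (K - 1) (n + 1)) *
                (downRate ν l m / (totalUp lam f ζ m + totalDown ν m))) := by
          intro m hm
          set A := ∑ l ∈ layer N (n - 1),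
              pI K (n - 1) l / lamI lam f ζ pI K (n - 1) *
                (upRate lam f ζ l m / (totalUp lam f ζ m + totalDown ν m)) with hA
          set B := ∑ l ∈ adjLayer (n + 1) m,
              pI (K - 1) (n + 1) l * (lamI lam f ζ pI (K - 1) n / muI ν pI (K - 1) (n + 1)) *
                (downRate ν l m / (totalUp lam f ζ m + totalDown ν m)) with hB
          have heq : ∀ r : ℕ, pR K n (r + 1) m = muR ν pR K n r * A + B := by
            intro r
            rw [h9 K hK n hn1 hn2 (r + 1) (by omega) m hm]
            simp only [Nat.add_sub_cancel]
            congr 1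
            rw [hA, Finset.mul_sum]
            apply Finset.sum_congr rfl
            intro l _
            ring
          have t1 : Tendsto (fun r => pR K n (r + 1) m) atTop (nhds (pI K n m)) :=
            (h10 K hK n hn1 hn2 m hm).comp (tendsto_add_atTop_nat 1)
          have t2 : Tendsto (fun r => muR ν pR K n r * A + B) atTop
              (nhds (muI ν pI K n * A + B)) := (hmuRlim.mul_const A).add_const B
          rw [← funext heq] at t2
          exact tendsto_nhds_unique t1 t2
        -- multiply the fixed-point equation by (λ_m + μ_m) and sum over the layer
        have hsum : ∑ m ∈ layer N n, pI K n m * (totalUp lam f ζ m + totalDown ν m)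
            = muI ν pI K n + lam := by
          have hterm : ∀ m ∈ layer N n,
              pI K n m * (totalUp lam f ζ m + totalDown ν m)
              = muI ν pI K n * (∑ l ∈ layer N (n - 1),
                  pI K (n - 1) l / lam * upRate lam f ζ l m) +
                (∑ l ∈ adjLayer (n + 1) m,
                  (pI k (n + 1) l * (lam / muI ν pI k (n + 1))) * downRate ν l m) := by
            intro m hm
            rw [hfix m hm, add_mul, mul_assoc, Finset.sum_mul, Finset.sum_mul]
            have hne := (htotpos m hm).ne'
            congr 1
            · congr 1
              apply Finset.sum_congr rfl
              intro l _
              rw [hlamIprev]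
              field_simp
            · apply Finset.sum_congr rfl
              intro l _
              rw [hK1, hlamIkn]
              field_simp
          rw [Finset.sum_congr rfl hterm, Finset.sum_add_distrib]
          have hup : ∑ m ∈ layer N n, muI ν pI K n * (∑ l ∈ layer N (n - 1),
              pI K (n - 1) l / lam * upRate lam f ζ l m) = muI ν pI K n := by
            rw [← Finset.mul_sum, Finset.sum_comm]
            have : ∀ l ∈ layer N (n - 1),
                ∑ m ∈ layer N n, pI K (n - 1) l / lam * upRate lam f ζ l m
                  = pI K (n - 1) l := by
              intro l hl
              rw [← Finset.mul_sum,
                sum_upRate_layer lam f ζ l n (by rw [mem_layer_iff.mp hl]; omega),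
                totalUp_eq_lam lam f hfsum ζ l
                  (exists_false_of_wt_lt (by rw [mem_layer_iff.mp hl]; omega)),
                div_mul_cancel₀ _ hlam.ne']
            rw [Finset.sum_congr rfl this, IHprev.2, mul_one]
          have hdn : ∑ m ∈ layer N n, (∑ l ∈ adjLayer (n + 1) m,
              (pI k (n + 1) l * (lam / muI ν pI k (n + 1))) * downRate ν l m) = lam := by
            rw [sum_adj_downRate ν n (fun l => pI k (n + 1) l * (lam / muI ν pI k (n + 1)))]
            have : ∀ l ∈ layer N (n + 1),
                pI k (n + 1) l * (lam / muI ν pI k (n + 1)) * totalDown ν l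
                = lam / muI ν pI k (n + 1) * (pI k (n + 1) l * totalDown ν l) := by
              intro l _; ring
            rw [Finset.sum_congr rfl this, ← Finset.mul_sum]
            have : ∑ l ∈ layer N (n + 1), pI k (n + 1) l * totalDown ν l
                = muI ν pI k (n + 1) := rfl
            rw [this, div_mul_cancel₀ _ hmuIk.ne']
          rw [hup, hdn]
        have hxpand : ∑ m ∈ layer N n, pI K n m * (totalUp lam f ζ m + totalDown ν m)
            = lam * (∑ m ∈ layer N n, pI K n m) + muI ν pI K n := by
          have : ∀ m ∈ layer N n, pI K n m * (totalUp lam f ζ m + totalDown ν m)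
              = lam * pI K n m + pI K n m * totalDown ν m := by
            intro m hm; rw [htot m hm]; ring
          rw [Finset.sum_congr rfl this, Finset.sum_add_distrib, ← Finset.mul_sum]
          rfl
        rw [hxpand] at hsum
        have : lam * (∑ m ∈ layer N n, pI K n m) = lam * 1 := by
          rw [mul_one]; linarith
        exact mul_left_cancel₀ hlam.ne' this
/-- Lemma 3.1, part 2 (normalization property). -/
theorem cpu_normalization
    {N J : ℕ} (hN : 2 ≤ N) (hJ : 1 ≤ J)
    (lam : ℝ) (hlam : 0 < lam)
    (f : Fin J → ℝ) (hf : ∀ j, 0 ≤ f j) (hfsum : ∑ j, f j = 1)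
    (ν : Fin N → ℝ) (hν : ∀ i, 0 < ν i)
    (ζ : Fin J → (Fin N ≃ Fin N))
    (pI : ℕ → ℕ → (Fin N → Bool) → ℝ) (pR : ℕ → ℕ → ℕ → (Fin N → Bool) → ℝ)
    (hiter : IsCPUIterates lam f ζ ν pI pR) :
    (∀ k, 1 ≤ k → ∀ n ≤ N,
      Filter.Tendsto (fun r => ∑ m ∈ layer N n, pR k n r m) Filter.atTop (nhds 1)) ∧
    (∀ k, 2 ≤ k → ∀ n ≤ N, ∑ m ∈ layer N n, pI k n m = 1) := by
  have main := cpu_main hN hJ lam hlam f hf hfsum ν hν ζ pI pR hiter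
  obtain ⟨h1, h2, h3, h4, h5, h6, h7, h8, h9, h10⟩ := hiter
  constructor
  · intro k hk n hn
    rcases eq_or_lt_of_le hk with rfl | hk2
    · -- k = 1 : eventually constant
      have hconst : ∀ r, 1 ≤ r → ∑ m ∈ layer N n, pR 1 n r m = 1 := by
        intro r hr
        rw [Finset.sum_congr rfl (h3 n hn r hr), Finset.sum_const, card_layer,
          nsmul_eq_mul]
        have hc : (N.choose n : ℝ) ≠ 0 := Nat.cast_ne_zero.mpr (Nat.choose_pos hn).ne'
        field_simp
      apply Tendsto.congr' _ tendsto_const_nhds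
      filter_upwards [eventually_ge_atTop 1] with r hr
      exact (hconst r hr).symm
    · have hk2' : 2 ≤ k := hk2
      rcases Nat.eq_zero_or_pos n with rfl | hn1
      · have hconst : ∀ r, ∑ m ∈ layer N 0, pR k 0 r m = 1 := by
          intro r
          rw [Finset.sum_congr rfl (h6 k hk2' r), Finset.sum_const, card_layer]
          simp
        simp only [hconst]
        exact tendsto_const_nhds
      rcases eq_or_lt_of_le hn with heq | hnN
      · have hconst : ∀ r, ∑ m ∈ layer N n, pR k n r m = 1 := by
          intro r
          rw [heq, Finset.sum_congr rfl (h7 k hk2' r), Finset.sum_const, card_layer]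
          simp
        simp only [hconst]
        exact tendsto_const_nhds
      · have hmain := main k (by omega) n hn
        have hconv : Tendsto (fun r => ∑ m ∈ layer N n, pR k n r m) atTop
            (nhds (∑ m ∈ layer N n, pI k n m)) :=
          tendsto_finset_sum _ (fun m hm => h10 k hk2' n hn1 (by omega) m hm)
        rwa [hmain.2] at hconv
  · intro k hk n hn
    exact (main k (by omega) n hn).2
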